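/- Let (Ω, μ) be a probability space and let φ : Ω → ℂ be in L²(μ) with |φ(ω)| ∈ {0, C} a.e. for some constant C > 0, and φ not a.e. zero. Then the rank-one projection P f = (⟨f, φ⟩ / ‖φ‖₂²)·φ satisfies ‖P f‖_{L^p} ≤ ‖f‖_{L^p} for all f ∈ L^∞(μ) and all 1 ≤ p ≤ ∞. -/

import Mathlib

open MeasureTheory
open scoped ENNReal

theorem stmt_11 {Ω : Type*} [MeasurableSpace Ω] (μ : Measure Ω) [IsProbabilityMeasure μ]
    (φ : Ω → ℂ) (hφ2 : MemLp φ 2 μ)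
    (C : ℝ) (hC : 0 < C)
    (hval : ∀ᵐ ω ∂μ, ‖φ ω‖ = 0 ∨ ‖φ ω‖ = C)
    (hnz : ¬ φ =ᵐ[μ] 0)
    (p : ℝ≥0∞) (hp : 1 ≤ p)
    (f : Ω → ℂ) (hf : Measurable f) (hfb : ∃ M : ℝ, ∀ ω, ‖f ω‖ ≤ M) :
    eLpNorm (fun ω =>
        ((∫ x, f x * (starRingEnd ℂ) (φ x) ∂μ) / ((eLpNorm φ 2 μ).toReal ^ 2 : ℂ)) * φ ω)
      p μ ≤ eLpNorm f p μ := by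
  classical
  obtain ⟨M, hM⟩ := hfb
  have hp0 : p ≠ 0 := fun h => by simp [h] at hp
  set g : Ω → ℂ := hφ2.1.mk φ with hgdef
  have hgsm : StronglyMeasurable g := hφ2.1.stronglyMeasurable_mk
  have hgae : φ =ᵐ[μ] g := hφ2.1.ae_eq_mk
  set A : Set Ω := {ω | g ω ≠ 0} with hAdef
  have hAm : MeasurableSet A := (hgsm.measurable (measurableSet_singleton 0)).compl
  have hgval : ∀ᵐ ω ∂μ, ‖g ω‖ = 0 ∨ ‖g ω‖ = C := by
    filter_upwards [hval, hgae] with ω h1 h2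
    rwa [h2] at h1
  -- A has positive measure
  have hA0 : μ A ≠ 0 := by
    intro h
    apply hnz
    have hg0 : g =ᵐ[μ] 0 := by
      rw [Filter.EventuallyEq, ae_iff]
      exact h
    exact hgae.trans hg0
  -- a.e. norm identity with indicator
  have h_ind : ∀ᵐ ω ∂μ, ‖φ ω‖ = ‖A.indicator (fun _ => (C : ℂ)) ω‖ := by
    filter_upwards [hgval, hgae] with ω h1 h2
    by_cases hω : ω ∈ A
    · have hgne : g ω ≠ 0 := hω
      have habs : ‖g ω‖ = C := by
        rcases h1 with h1 | h1
        · exact absurd (norm_eq_zero.mp h1) hgne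
        · exact h1
      simp [Set.indicator_of_mem hω, h2, habs,
        Complex.norm_real, Real.norm_eq_abs, abs_of_pos hC]
    · have hg0 : g ω = 0 := not_not.mp hω
      simp [Set.indicator_of_notMem hω, h2, hg0]
  have heq : ∀ q : ℝ≥0∞, eLpNorm φ q μ = eLpNorm (A.indicator fun _ => (C : ℂ)) q μ :=
    fun _ => eLpNorm_congr_norm_ae h_ind
  set a : ℝ≥0∞ := μ A with hadef
  have haT : a ≠ ∞ := (measure_lt_top μ A).ne
  set ar : ℝ := a.toReal with hardef
  have harpos : 0 < ar := ENNReal.toReal_pos hA0 haT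
  have hCnorm : ‖(C : ℂ)‖ = C := by
    simp [Complex.norm_real, Real.norm_eq_abs, abs_of_pos hC]
  -- eLpNorms of φ
  have hNp : eLpNorm φ p μ = ‖(C : ℂ)‖₊ * a ^ (1 / p.toReal) := by
    rw [heq p, eLpNorm_indicator_const' hAm hA0 hp0, enorm_eq_nnnorm]
  have hN2 : eLpNorm φ 2 μ = ‖(C : ℂ)‖₊ * a ^ (1 / (2 : ℝ≥0∞).toReal) := by
    rw [heq 2, eLpNorm_indicator_const' hAm hA0 (by norm_num), enorm_eq_nnnorm]
  have hcoeC : ((‖(C : ℂ)‖₊ : ℝ≥0∞)).toReal = C := by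
    rw [ENNReal.coe_toReal, coe_nnnorm, hCnorm]
  have hN2r : (eLpNorm φ 2 μ).toReal ^ 2 = C ^ 2 * ar := by
    rw [hN2, ENNReal.toReal_mul, hcoeC, ← ENNReal.toReal_rpow]
    have h2 : (1 / (2 : ℝ≥0∞).toReal) = (1 / 2 : ℝ) := by norm_num
    rw [h2, mul_pow, ← Real.rpow_natCast (ar ^ (1/2 : ℝ)) 2,
      ← Real.rpow_mul ENNReal.toReal_nonneg]
    norm_num
    left; rfl
  have hNpr : (eLpNorm φ p μ).toReal = C * ar ^ (1 / p.toReal) := by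
    rw [hNp, ENNReal.toReal_mul, hcoeC, ← ENNReal.toReal_rpow]
  -- integrability facts
  have hfae : AEStronglyMeasurable f μ := hf.aestronglyMeasurable
  have hfM : ∀ ω, ‖f ω‖ ≤ M := fun ω => by exact hM ω
  have hfbd : ∀ᵐ ω ∂μ, ‖f ω‖ ≤ M := Filter.Eventually.of_forall hfM
  have hfp : MemLp f p μ := MemLp.of_bound hfae M hfbd
  have hNf_ne : eLpNorm f p μ ≠ ∞ := hfp.2.ne
  have hφbd : ∀ᵐ ω ∂μ, ‖φ ω‖ ≤ C := by
    filter_upwards [hval] with ω h1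
    rcases h1 with h1 | h1 <;> rw [h1]
    · exact hC.le
  have hφp : MemLp φ p μ := MemLp.of_bound hφ2.1 C hφbd
  have hNp_ne : eLpNorm φ p μ ≠ ∞ := hφp.2.ne
  have hconj : AEStronglyMeasurable (fun x => (starRingEnd ℂ) (φ x)) μ :=
    Complex.continuous_conj.comp_aestronglyMeasurable hφ2.1
  have hmulae : AEStronglyMeasurable (fun x => f x * (starRingEnd ℂ) (φ x)) μ :=
    hfae.mul hconj
  have hint : Integrable (fun x => f x * (starRingEnd ℂ) (φ x)) μ := by
    rw [← memLp_one_iff_integrable]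
    refine MemLp.of_bound hmulae (M * C) ?_
    filter_upwards [hφbd] with ω h1
    rw [norm_mul, RingHomIsometric.norm_map]
    exact mul_le_mul (hfM ω) h1 (norm_nonneg _) (le_trans (norm_nonneg _) (hfM ω))
  -- bound the inner product
  set J : ℝ := ∫ ω in A, ‖f ω‖ ∂μ with hJdef
  have hI : ‖∫ x, f x * (starRingEnd ℂ) (φ x) ∂μ‖ ≤ C * J := by
    refine le_trans (norm_integral_le_integral_norm _) ?_
    have hcong : ∫ x, ‖f x * (starRingEnd ℂ) (φ x)‖ ∂μ
        = ∫ x, A.indicator (fun ω => C * ‖f ω‖) x ∂μ := by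
      refine integral_congr_ae ?_
      filter_upwards [h_ind] with ω h1
      rw [norm_mul, RingHomIsometric.norm_map, h1]
      by_cases hω : ω ∈ A
      · rw [Set.indicator_of_mem hω, Set.indicator_of_mem hω, hCnorm, mul_comm]
      · simp [Set.indicator_of_notMem hω]
    rw [hcong, integral_indicator hAm, integral_const_mul]
  -- exponent facts
  set t : ℝ := 1 / p.toReal with htdef
  have ht0 : 0 ≤ t := by positivity
  have ht1 : t ≤ 1 := by
    by_cases hptop : p = ∞
    · simp [htdef, hptop]
    · have h1p : 1 ≤ p.toReal := by
        simpa using ENNReal.toReal_mono hptop hp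
      rw [htdef, div_le_one (by linarith)]
      linarith
  -- Hölder on A
  have hJ0 : 0 ≤ J := integral_nonneg fun ω => norm_nonneg _
  have hfint : Integrable f μ := memLp_one_iff_integrable.mp (MemLp.of_bound hfae M hfbd)
  have hJ1 : ENNReal.ofReal J = eLpNorm f 1 (μ.restrict A) := by
    rw [eLpNorm_one_eq_lintegral_enorm]
    exact ofReal_integral_norm_eq_lintegral_enorm hfint.restrict
  have hexp : 1 / (1 : ℝ≥0∞).toReal - 1 / p.toReal = 1 - t := by simp [htdef]
  have hJ2 : ENNReal.ofReal J ≤ eLpNorm f p μ * a ^ (1 - t) := by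
    rw [hJ1]
    calc eLpNorm f 1 (μ.restrict A)
        ≤ eLpNorm f p (μ.restrict A)
            * (μ.restrict A) Set.univ ^ (1 / (1 : ℝ≥0∞).toReal - 1 / p.toReal) :=
          eLpNorm_le_eLpNorm_mul_rpow_measure_univ hp hfae.restrict
      _ ≤ eLpNorm f p μ * a ^ (1 - t) := by
          rw [Measure.restrict_apply_univ, hexp]
          exact mul_le_mul_left (eLpNorm_mono_measure f Measure.restrict_le_self) _
  have hJle : J ≤ (eLpNorm f p μ).toReal * ar ^ (1 - t) := by
    have hfin : eLpNorm f p μ * a ^ (1 - t) ≠ ∞ :=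
      ENNReal.mul_ne_top hNf_ne (ENNReal.rpow_ne_top_of_nonneg (by linarith) haT)
    have h := (ENNReal.ofReal_le_iff_le_toReal hfin).mp hJ2
    rwa [ENNReal.toReal_mul, ← ENNReal.toReal_rpow] at h
  -- assemble
  rw [show (fun ω => ((∫ x, f x * (starRingEnd ℂ) (φ x) ∂μ)
        / ((eLpNorm φ 2 μ).toReal ^ 2 : ℂ)) * φ ω)
      = ((∫ x, f x * (starRingEnd ℂ) (φ x) ∂μ)
        / ((eLpNorm φ 2 μ).toReal ^ 2 : ℂ)) • φ from rfl,
    eLpNorm_const_smul, enorm_eq_nnnorm]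
  have hfinL : (‖(∫ x, f x * (starRingEnd ℂ) (φ x) ∂μ)
      / ((eLpNorm φ 2 μ).toReal ^ 2 : ℂ)‖₊ : ℝ≥0∞) * eLpNorm φ p μ ≠ ∞ :=
    ENNReal.mul_ne_top ENNReal.coe_ne_top hNp_ne
  rw [← ENNReal.toReal_le_toReal hfinL hNf_ne, ENNReal.toReal_mul, ENNReal.coe_toReal,
    coe_nnnorm, hNpr, norm_div, norm_pow, Complex.norm_real, Real.norm_eq_abs, sq_abs, hN2r]
  set I : ℝ := ‖∫ x, f x * (starRingEnd ℂ) (φ x) ∂μ‖ with hIdef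
  set Nfr : ℝ := (eLpNorm f p μ).toReal with hNfrdef
  have hNfr0 : 0 ≤ Nfr := ENNReal.toReal_nonneg
  have hkey : ar ^ (1 - t) * ar ^ t = ar := by
    rw [← Real.rpow_add harpos]
    norm_num
  rw [div_mul_eq_mul_div, div_le_iff₀ (by positivity : (0:ℝ) < C ^ 2 * ar)]
  calc I * (C * ar ^ t) ≤ (C * (Nfr * ar ^ (1 - t))) * (C * ar ^ t) := by
        refine mul_le_mul_of_nonneg_right (le_trans hI ?_) (by positivity)
        exact mul_le_mul_of_nonneg_left hJle hC.le
    _ = Nfr * (C ^ 2 * ar) := by linear_combination (C ^ 2 * Nfr) * hkey
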